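/- For every even number n ≥ 2, there is no balanced doubly arithmetic triangle DAT(a,d1,d2,m) in Z/nZ for any a, d1, d2 in Z/nZ and any m ≥ 1 (with nonempty triangle). -/

import Mathlib

def DAT (n : ℕ) (a d1 d2 : ZMod n) (m : ℕ) : Multiset (ZMod n) :=
  ((Finset.range m ×ˢ Finset.range m).filter (fun p => p.1 + p.2 < m)).val.map
    (fun p => a + p.1 • d1 + p.2 • d2)

def IsBalanced {n : ℕ} (M : Multiset (ZMod n)) : Prop :=
  ∀ x y : ZMod n, M.count x = M.count y

open Finset

/-- The index triangle. -/
def tri (m : ℕ) : Finset (ℕ × ℕ) :=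
  (Finset.range m ×ˢ Finset.range m).filter (fun p => p.1 + p.2 < m)

/-- The parity weight. -/
def ww (n : ℕ) (x : ZMod n) : ℤ := (-1) ^ x.val

lemma pow_mod_two' (a : ℕ) : (-1 : ℤ) ^ (a % 2) = (-1) ^ a := by
  conv_rhs => rw [← Nat.div_add_mod a 2]
  rw [pow_add, pow_mul, neg_one_sq, one_pow, one_mul]

lemma ww_add {n : ℕ} [NeZero n] (hne : Even n) (x y : ZMod n) :
    ww n (x + y) = ww n x * ww n y := by
  unfold ww
  rw [ZMod.val_add, ← pow_add, ← pow_mod_two' ((x.val + y.val) % n),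
    Nat.mod_mod_of_dvd _ hne.two_dvd, pow_mod_two']

lemma ww_nsmul {n : ℕ} [NeZero n] (hne : Even n) (d : ZMod n) (i : ℕ) :
    ww n (i • d) = (ww n d) ^ i := by
  induction i with
  | zero => simp [ww]
  | succ i ih => rw [succ_nsmul, ww_add hne, ih, pow_succ]

lemma sum_ww {n : ℕ} [NeZero n] (hne : Even n) :
    ∑ y : ZMod n, ww n y = 0 := by
  have h : ∑ y : ZMod n, ww n y = ∑ i ∈ range n, (-1 : ℤ) ^ i := by
    apply Finset.sum_nbij' (i := fun y => ZMod.val y) (j := fun i => (i : ZMod n))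
    · intro a _; exact mem_range.2 (ZMod.val_lt a)
    · intro a _; exact mem_univ _
    · intro a _; exact ZMod.natCast_zmod_val a
    · intro a ha; exact ZMod.val_cast_of_lt (mem_range.1 ha)
    · intro a _; rfl
  rw [h, neg_one_geom_sum, if_pos hne]

lemma tri_sum {M : Type*} [AddCommMonoid M] (m : ℕ) (f : ℕ → ℕ → M) :
    ∑ p ∈ tri m, f p.1 p.2 = ∑ i ∈ range m, ∑ j ∈ range (m - i), f i j := by
  rw [tri, Finset.sum_filter, Finset.sum_product]
  refine Finset.sum_congr rfl fun i hi => ?_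
  rw [← Finset.sum_filter]
  apply Finset.sum_congr _ (fun _ _ => rfl)
  ext j
  simp only [mem_filter, mem_range] at *
  omega

lemma g_ge (m : ℕ) (hm : 1 ≤ m) : 1 ≤ ∑ i ∈ range m, (-1 : ℤ) ^ i * ((m : ℤ) - i) := by
  induction m, hm using Nat.le_induction with
  | base => simp
  | succ m hm ih =>
    have key : ∑ i ∈ range (m + 1), (-1 : ℤ) ^ i * (((m : ℕ) + 1 : ℤ) - i)
        = (∑ i ∈ range (m + 1), (-1 : ℤ) ^ i * ((m : ℤ) - i))
          + ∑ i ∈ range (m + 1), (-1 : ℤ) ^ i := by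
      rw [← Finset.sum_add_distrib]
      exact Finset.sum_congr rfl fun i _ => by ring
    have h2 : ∑ i ∈ range (m + 1), (-1 : ℤ) ^ i * ((m : ℤ) - i)
        = ∑ i ∈ range m, (-1 : ℤ) ^ i * ((m : ℤ) - i) := by
      rw [Finset.sum_range_succ]; simp
    have hA : (0 : ℤ) ≤ ∑ i ∈ range (m + 1), (-1 : ℤ) ^ i := by
      rw [neg_one_geom_sum]; split <;> norm_num
    push_cast
    push_cast at key
    rw [key, h2]
    linarith

lemma count_ge (m : ℕ) (hm : 1 ≤ m) :
    1 ≤ ∑ i ∈ range m, (if Even (m - i) then (0 : ℤ) else 1) := by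
  have h0 : ∀ i ∈ range m, (0 : ℤ) ≤ (if Even (m - i) then (0 : ℤ) else 1) := by
    intro i _; split <;> norm_num
  have hmem : m - 1 ∈ range m := mem_range.2 (by omega)
  have := Finset.single_le_sum h0 hmem
  have h1 : m - (m - 1) = 1 := by omega
  rw [h1] at this
  simpa using this

lemma F_ne_zero (e1 e2 : ℤ) (he1 : e1 = 1 ∨ e1 = -1) (he2 : e2 = 1 ∨ e2 = -1)
    (m : ℕ) (hm : 0 < m) :
    (∑ p ∈ tri m, e1 ^ p.1 * e2 ^ p.2) ≠ 0 := by
  rw [tri_sum m (fun i j => e1 ^ i * e2 ^ j)]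
  rcases he2 with he2 | he2
  · subst he2
    rcases he1 with he1 | he1
    · subst he1
      simp only [one_pow, one_mul, Finset.sum_const, Finset.card_range, nsmul_eq_mul, mul_one]
      have h : 1 ≤ ∑ i ∈ range m, ((m - i : ℕ) : ℤ) := by
        have h0 : ∀ i ∈ range m, (0 : ℤ) ≤ ((m - i : ℕ) : ℤ) := fun i _ => by positivity
        have hmem : (0 : ℕ) ∈ range m := mem_range.2 hm
        have h1 : (1 : ℤ) ≤ (m : ℤ) := by exact_mod_cast hm
        calc (1 : ℤ) ≤ (m : ℤ) := h1
          _ = ((m - 0 : ℕ) : ℤ) := by simp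
          _ ≤ _ := Finset.single_le_sum h0 hmem
      omega
    · subst he1
      have h : ∑ i ∈ range m, ∑ j ∈ range (m - i), (-1 : ℤ) ^ i * 1 ^ j
          = ∑ i ∈ range m, (-1 : ℤ) ^ i * ((m : ℤ) - i) := by
        refine Finset.sum_congr rfl fun i hi => ?_
        simp only [one_pow, Finset.sum_const, Finset.card_range, nsmul_eq_mul, mul_one]
        have h3 : ((m - i : ℕ) : ℤ) = (m : ℤ) - i := by
          have := mem_range.1 hi; omega
        rw [h3]; ring
      rw [h]
      have := g_ge m hm
      omega
  · subst he2
    have hinner : ∀ i, ∑ j ∈ range (m - i), e1 ^ i * (-1 : ℤ) ^ j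
        = e1 ^ i * (if Even (m - i) then (0 : ℤ) else 1) := by
      intro i
      rw [← Finset.mul_sum, neg_one_geom_sum]
    simp only [hinner]
    rcases he1 with he1 | he1
    · subst he1
      simp only [one_pow, one_mul]
      have := count_ge m hm
      omega
    · subst he1
      have h : ∑ i ∈ range m, (-1 : ℤ) ^ i * (if Even (m - i) then (0 : ℤ) else 1)
          = (-1 : ℤ) ^ (m - 1) * ∑ i ∈ range m, (if Even (m - i) then (0 : ℤ) else 1) := by
        rw [Finset.mul_sum]
        refine Finset.sum_congr rfl fun i hi => ?_
        by_cases hev : Even (m - i)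
        · simp [hev]
        · have him := mem_range.1 hi
          have hodd : (m - i) % 2 = 1 := Nat.odd_iff.1 (Nat.not_even_iff_odd.1 hev)
          have hpar : i % 2 = (m - 1) % 2 := by omega
          rw [← pow_mod_two' i, ← pow_mod_two' (m - 1), hpar]
      rw [h]
      have hc := count_ge m hm
      have hp : (-1 : ℤ) ^ (m - 1) ≠ 0 := pow_ne_zero _ (by norm_num)
      exact mul_ne_zero hp (by omega)

theorem stmt1 (n : ℕ) (hn : 2 ≤ n) (hne : Even n) (a d1 d2 : ZMod n) (m : ℕ) (hm : 0 < m) :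
    ¬ IsBalanced (DAT n a d1 d2 m) := by
  intro hbal
  haveI : NeZero n := ⟨by omega⟩
  set M := DAT n a d1 d2 m with hM
  have haM : a ∈ M := by
    refine Multiset.mem_map.2 ⟨(0, 0), ?_, by simp⟩
    simp only [Finset.mem_val, Finset.mem_filter, Finset.mem_product, Finset.mem_range]
    omega
  have hkpos : 0 < M.count a := Multiset.count_pos.2 haM
  have huniv : M.toFinset = Finset.univ := by
    apply Finset.eq_univ_of_forall
    intro y
    rw [Multiset.mem_toFinset, ← Multiset.count_pos, hbal y a]
    exact hkpos
  -- the weighted sum is zero by balance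
  have hS0 : (M.map (ww n)).sum = 0 := by
    rw [Finset.sum_multiset_map_count, huniv]
    have h1 : ∑ y : ZMod n, M.count y • ww n y = ∑ y : ZMod n, M.count a • ww n y :=
      Finset.sum_congr rfl fun y _ => by rw [hbal y a]
    rw [h1, ← Finset.smul_sum, sum_ww hne, smul_zero]
  -- the weighted sum factors
  have hS : (M.map (ww n)).sum
      = ww n a * ∑ p ∈ tri m, (ww n d1) ^ p.1 * (ww n d2) ^ p.2 := by
    rw [hM, DAT, Multiset.map_map]
    have h2 : ((tri m).val.map ((ww n) ∘ fun p : ℕ × ℕ => a + p.1 • d1 + p.2 • d2)).sum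
        = ∑ p ∈ tri m, ww n (a + p.1 • d1 + p.2 • d2) := rfl
    rw [show (((Finset.range m ×ˢ Finset.range m).filter (fun p => p.1 + p.2 < m)).val.map
        ((ww n) ∘ fun p : ℕ × ℕ => a + p.1 • d1 + p.2 • d2)).sum
        = ∑ p ∈ tri m, ww n (a + p.1 • d1 + p.2 • d2) from rfl]
    rw [Finset.mul_sum]
    refine Finset.sum_congr rfl fun p _ => ?_
    rw [ww_add hne, ww_add hne, ww_nsmul hne, ww_nsmul hne, mul_assoc]
  have hwa : ww n a ≠ 0 := pow_ne_zero _ (by norm_num)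
  have he1 : ww n d1 = 1 ∨ ww n d1 = -1 := by
    unfold ww; rcases Nat.even_or_odd d1.val with h | h
    · exact Or.inl h.neg_one_pow
    · exact Or.inr h.neg_one_pow
  have he2 : ww n d2 = 1 ∨ ww n d2 = -1 := by
    unfold ww; rcases Nat.even_or_odd d2.val with h | h
    · exact Or.inl h.neg_one_pow
    · exact Or.inr h.neg_one_pow
  have hF := F_ne_zero _ _ he1 he2 m hm
  have h0 : ww n a * ∑ p ∈ tri m, (ww n d1) ^ p.1 * (ww n d2) ^ p.2 = 0 := by
    rw [← hS, hS0]
  rcases mul_eq_zero.1 h0 with h | h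
  · exact hwa h
  · exact hF h
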